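/- arXiv:2106.14061 — 2 statements merged into one kernel-verified Lean document; each statement's English description precedes it below -/
import Mathlib

section
/- Let q be a prime power, fix r, j, m ∈ ℕ with j ≤ m, let H be a j-uniform hypergraph on {1,…,m}, and let S be a finite set of monic irreducible polynomials in 𝔽_q[x]. Let E_S ⊆ (𝔽_q[x])^m be the set of m-tuples that are H-wise relatively r-prime with respect to S, set F = ∏_{f∈S} f^r, and let N = b·q^{deg F} − 1 for some b ∈ ℕ. Then |E_S ∩ ℳ_N| = (b·q^{deg F})^m · ∏_{f ∈ S} q^{−rm·deg f} · ∏_{f ∈ S} [ ∑_{k=0}^m i_k(H) (q^{r·deg f} − 1)^{m−k} ]. -/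
open scoped BigOperators

/-- The number of independent vertex sets of cardinality `k` of the hypergraph `H`. -/
noncomputable def indepCount {m : ℕ} (H : Finset (Finset (Fin m))) (k : ℕ) : ℕ :=
  Nat.card {s : Finset (Fin m) // (∀ e ∈ H, ¬ e ⊆ s) ∧ s.card = k}

/-- The `l`-th polynomial `f_l` in the enumeration of `𝔽_q[x]` determined by the
enumeration `a` of `𝔽_q` (with `a 0 = 0`). -/
noncomputable def fenum {Fq : Type*} [Field Fq] [Fintype Fq]
    (a : Fin (Fintype.card Fq) → Fq) (l : ℕ) : Polynomial Fq :=
  ∑ i ∈ Finset.range (l + 1),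
    Polynomial.C (a ⟨l / (Fintype.card Fq) ^ i % Fintype.card Fq,
      Nat.mod_lt _ Fintype.card_pos⟩) * Polynomial.X ^ i

private lemma digits_unique (q : ℕ) (hq : 2 ≤ q) :
    ∀ n l l', l < q ^ n → l' < q ^ n →
      (∀ i, l / q ^ i % q = l' / q ^ i % q) → l = l' := by
  intro n
  induction n with
  | zero => intro l l' hl hl' _; simp [pow_zero] at hl hl'; omega
  | succ n ih =>
    intro l l' hl hl' h
    have h0 := h 0
    simp only [pow_zero, Nat.div_one] at h0
    have hq0 : 0 < q := by omega
    have hdiv : l / q = l' / q := by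
      apply ih
      · rw [Nat.div_lt_iff_lt_mul hq0, ← pow_succ]; exact hl
      · rw [Nat.div_lt_iff_lt_mul hq0, ← pow_succ]; exact hl'
      · intro i
        have := h (i + 1)
        rw [pow_succ'] at this
        rwa [Nat.div_div_eq_div_mul, Nat.div_div_eq_div_mul]
    have e1 := Nat.div_add_mod l q
    have e2 := Nat.div_add_mod l' q
    have e3 : q * (l / q) = q * (l' / q) := by rw [hdiv]
    omega

section
variable {Fq : Type*} [Field Fq] [Fintype Fq] (a : Fin (Fintype.card Fq) → Fq)

lemma fenum_coeff (ha0 : a ⟨0, Fintype.card_pos⟩ = 0) (l i : ℕ) :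
    (fenum a l).coeff i
      = a ⟨l / Fintype.card Fq ^ i % Fintype.card Fq, Nat.mod_lt _ Fintype.card_pos⟩ := by
  have hq : 1 < Fintype.card Fq := Fintype.one_lt_card
  unfold fenum
  rw [Polynomial.finset_sum_coeff]
  simp only [Polynomial.coeff_C_mul, Polynomial.coeff_X_pow, mul_ite, mul_one, mul_zero]
  rw [Finset.sum_ite_eq (Finset.range (l + 1)) i]
  by_cases hi : i ∈ Finset.range (l + 1)
  · rw [if_pos hi]
  · rw [if_neg hi]
    have hil : l < i := by simpa using Nat.lt_of_succ_le (Nat.not_lt.mp (by simpa using hi))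
    have hlq : l < Fintype.card Fq ^ i := lt_trans hil (Nat.lt_pow_self hq)
    rw [show l / Fintype.card Fq ^ i = 0 from Nat.div_eq_of_lt hlq]
    simpa using ha0.symm

lemma fenum_injective (ha : Function.Injective a) (ha0 : a ⟨0, Fintype.card_pos⟩ = 0) :
    Function.Injective (fenum a) := by
  intro l l' h
  have hq : 1 < Fintype.card Fq := Fintype.one_lt_card
  have hd : ∀ i, l / Fintype.card Fq ^ i % Fintype.card Fq
      = l' / Fintype.card Fq ^ i % Fintype.card Fq := by
    intro i
    have h1 := congrArg (fun p => Polynomial.coeff p i) h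
    simp only [fenum_coeff a ha0] at h1
    exact Fin.mk.injEq _ _ _ _ ▸ (ha h1)
  refine digits_unique (Fintype.card Fq) hq (max l l' + 1) l l' ?_ ?_ hd
  · exact lt_trans (Nat.lt_succ_of_le (le_max_left _ _)) (Nat.lt_pow_self hq)
  · exact lt_trans (Nat.lt_succ_of_le (le_max_right _ _)) (Nat.lt_pow_self hq)

lemma fenum_mem_degreeLT (ha0 : a ⟨0, Fintype.card_pos⟩ = 0) (n l : ℕ)
    (hl : l < Fintype.card Fq ^ n) : fenum a l ∈ Polynomial.degreeLT Fq n := by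
  rw [Polynomial.mem_degreeLT]
  rw [Polynomial.degree_lt_iff_coeff_zero]
  intro i hi
  have hi' : n ≤ i := by exact_mod_cast hi
  have : l < Fintype.card Fq ^ i :=
    lt_of_lt_of_le hl (Nat.pow_le_pow_right Fintype.card_pos hi')
  rw [fenum_coeff a ha0, show l / Fintype.card Fq ^ i = 0 from Nat.div_eq_of_lt this]
  simpa using ha0

private lemma digit_split_lt (q d u v i : ℕ) (hq0 : 0 < q) (hid : i < d) :
    (u * q ^ d + v) / q ^ i % q = v / q ^ i % q := by
  have h1 : u * q ^ d + v = v + u * q ^ (d - i) * q ^ i := by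
    rw [mul_assoc, ← pow_add, show d - i + i = d by omega]; ring
  rw [h1, Nat.add_mul_div_right _ _ (pow_pos hq0 i)]
  have h2 : u * q ^ (d - i) = u * q ^ (d - i - 1) * q := by
    rw [mul_assoc, ← pow_succ, show d - i - 1 + 1 = d - i by omega]
  rw [h2, Nat.add_mul_mod_self_right]

private lemma digit_split_ge (q d u v i : ℕ) (hq0 : 0 < q) (hv : v < q ^ d) (hid : d ≤ i) :
    (u * q ^ d + v) / q ^ i % q = u / q ^ (i - d) % q := by
  congr 1
  rw [show q ^ i = q ^ d * q ^ (i - d) by rw [← pow_add]; congr 1; omega,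
    ← Nat.div_div_eq_div_mul]
  congr 1
  rw [show u * q ^ d + v = q ^ d * u + v by ring, Nat.mul_add_div (pow_pos hq0 d),
    Nat.div_eq_of_lt hv, add_zero]

lemma fenum_split (ha0 : a ⟨0, Fintype.card_pos⟩ = 0) (d u v : ℕ)
    (hv : v < Fintype.card Fq ^ d) :
    fenum a (u * Fintype.card Fq ^ d + v)
      = fenum a v + Polynomial.X ^ d * fenum a u := by
  have hq : 1 < Fintype.card Fq := Fintype.one_lt_card
  have hq0 : 0 < Fintype.card Fq := Fintype.card_pos
  ext i
  rw [Polynomial.coeff_add, fenum_coeff a ha0, fenum_coeff a ha0, Polynomial.X_pow_mul,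
    Polynomial.coeff_mul_X_pow']
  rcases lt_or_ge i d with hid | hid
  · rw [if_neg (by omega), add_zero]
    congr 1
    exact Fin.ext (digit_split_lt _ d u v i hq0 hid)
  · rw [if_pos hid, fenum_coeff a ha0]
    have hvz : v / Fintype.card Fq ^ i = 0 :=
      Nat.div_eq_of_lt (lt_of_lt_of_le hv (Nat.pow_le_pow_right hq0 hid))
    rw [show (⟨v / Fintype.card Fq ^ i % Fintype.card Fq, Nat.mod_lt _ Fintype.card_pos⟩
        : Fin (Fintype.card Fq)) = ⟨0, Fintype.card_pos⟩ by simp [hvz], ha0, zero_add]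
    congr 1
    exact Fin.ext (digit_split_ge _ d u v i hq0 hv hid)

end


private lemma count_pattern {β : Type*} [Fintype β] [Zero β] [DecidableEq β] {m : ℕ}
    (H : Finset (Finset (Fin m))) :
    Nat.card {σ : Fin m → β // ∀ e ∈ H, ¬ ∀ i ∈ e, σ i = 0}
      = ∑ k ∈ Finset.range (m + 1),
          indepCount H k * (Fintype.card β - 1) ^ (m - k) := by
  classical
  set c := Fintype.card β with hc
  set t : (Fin m → β) → Finset (Fin m) :=
    fun σ => Finset.univ.filter (fun i => σ i = 0) with ht
  have hmem : ∀ σ i, i ∈ t σ ↔ σ i = 0 := by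
    intro σ i; simp [ht]
  -- fiber cardinality
  have key : ∀ s : Finset (Fin m),
      (Finset.univ.filter (fun σ : Fin m → β => t σ = s)).card
        = (c - 1) ^ (m - s.card) := by
    intro s
    rw [← Fintype.card_subtype]
    have e : {σ : Fin m → β // t σ = s} ≃ ({i : Fin m // i ∉ s} → {x : β // x ≠ 0}) := by
      refine
        { toFun := fun σ i => ⟨σ.1 i.1, fun h => i.2 (by have h2 := (hmem σ.1 i.1).mpr h; rwa [σ.2] at h2)⟩
          invFun := fun τ => ⟨fun i => if h : i ∈ s then 0 else (τ ⟨i, h⟩).1, ?_⟩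
          left_inv := ?_, right_inv := ?_ }
      · ext i
        rw [hmem]
        by_cases h : i ∈ s
        · simp [dif_pos h, h]
        · simpa [dif_neg h, h] using (τ ⟨i, h⟩).2
      · intro σ
        apply Subtype.ext
        funext i
        simp only
        by_cases h : i ∈ s
        · rw [dif_pos h]
          exact ((hmem σ.1 i).mp (by rw [σ.2]; exact h)).symm
        · rw [dif_neg h]
      · intro τ
        funext i
        apply Subtype.ext
        simp [dif_neg i.2]
    rw [Fintype.card_congr e, Fintype.card_fun]
    congr 1
    · simp [Fintype.card_subtype_compl, hc]
    · simp [Fintype.card_subtype_compl]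
  -- main count
  rw [Nat.card_eq_fintype_card, Fintype.card_subtype]
  set B : Finset (Finset (Fin m)) :=
    Finset.univ.filter (fun s => ∀ e ∈ H, ¬ e ⊆ s) with hB
  have hfil : Finset.univ.filter (fun σ : Fin m → β => ∀ e ∈ H, ¬ ∀ i ∈ e, σ i = 0)
      = Finset.univ.filter (fun σ => t σ ∈ B) := by
    apply Finset.filter_congr
    intro σ _
    simp only [hB, Finset.mem_filter, Finset.mem_univ, true_and]
    constructor
    · intro h e he hsub
      exact h e he (fun i hi => (hmem σ i).mp (hsub hi))
    · intro h e he hall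
      exact h e he (fun i hi => (hmem σ i).mpr (hall i hi))
  rw [hfil, Finset.card_eq_sum_card_fiberwise
    (f := t) (s := Finset.univ.filter (fun σ : Fin m → β => t σ ∈ B)) (t := B)
    (fun σ hσ => (Finset.mem_filter.mp (Finset.mem_coe.mp hσ)).2)]
  have hinner : ∀ s ∈ B,
      ((Finset.univ.filter (fun σ : Fin m → β => t σ ∈ B)).filter (fun σ => t σ = s)).card
        = (c - 1) ^ (m - s.card) := by
    intro s hs
    rw [Finset.filter_filter, ← key s]
    congr 1
    apply Finset.filter_congr
    intro σ _
    constructor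
    · exact fun h => h.2
    · exact fun h => ⟨h ▸ hs, h⟩
  rw [Finset.sum_congr rfl hinner]
  -- regroup by cardinality
  rw [← Finset.sum_fiberwise_of_maps_to (g := Finset.card) (t := Finset.range (m + 1))
    (fun s _ => Finset.mem_range.mpr (Nat.lt_succ_of_le (by
      simpa using Finset.card_le_card (Finset.subset_univ s))))]
  apply Finset.sum_congr rfl
  intro k hk
  have : ∀ s ∈ B.filter (fun s => s.card = k),
      (c - 1) ^ (m - s.card) = (c - 1) ^ (m - k) := by
    intro s hs
    rw [(Finset.mem_filter.mp hs).2]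
  rw [Finset.sum_congr rfl this, Finset.sum_const, smul_eq_mul]
  congr 1
  rw [indepCount, Nat.card_eq_fintype_card, Fintype.card_subtype, hB, Finset.filter_filter]


private lemma card_degreeLT (Fq : Type*) [Field Fq] [Fintype Fq] (n : ℕ) :
    Nat.card ↥(Polynomial.degreeLT Fq n) = Fintype.card Fq ^ n := by
  rw [Nat.card_congr (Polynomial.degreeLTEquiv Fq n).toEquiv]
  simp [Nat.card_eq_fintype_card]

private instance finite_degreeLT (Fq : Type*) [Field Fq] [Fintype Fq] (n : ℕ) :
    Finite ↥(Polynomial.degreeLT Fq n) :=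
  Finite.of_equiv _ (Polynomial.degreeLTEquiv Fq n).toEquiv.symm

private lemma nat_split_unique {Q u v u' v' : ℕ} (hv : v < Q) (hv' : v' < Q)
    (h : u * Q + v = u' * Q + v') : u = u' ∧ v = v' := by
  have hQ : 0 < Q := by omega
  have h2 : Q * u + v = Q * u' + v' := by rw [mul_comm Q u, mul_comm Q u']; exact h
  have e1 := Nat.mul_add_div hQ u v
  have e2 := Nat.mul_add_div hQ u' v'
  rw [Nat.div_eq_of_lt hv] at e1
  rw [Nat.div_eq_of_lt hv'] at e2
  rw [h2] at e1
  have h1 : u = u' := by omega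
  subst h1
  exact ⟨rfl, by omega⟩

private lemma exists_kappa {Fq : Type*} [Field Fq] [Fintype Fq]
    (a : Fin (Fintype.card Fq) → Fq) (ha : Function.Bijective a)
    (ha0 : a ⟨0, Fintype.card_pos⟩ = 0) (r : ℕ)
    (S : Finset (Polynomial Fq)) (hS : ∀ f ∈ S, f.Monic ∧ Irreducible f)
    (F : Polynomial Fq) (hF : F = ∏ f ∈ S, f ^ r)
    (b : ℕ) (hb : 1 ≤ b) (N : ℕ)
    (hN : N = b * Fintype.card Fq ^ F.natDegree - 1) :
    ∃ κ : {x : Polynomial Fq // ∃ l ≤ N, x = fenum a l} ≃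
        (Fin b × ∀ f : {x // x ∈ S},
          ↥(Polynomial.degreeLT Fq (r * (f : Polynomial Fq).natDegree))),
      ∀ (x : {x : Polynomial Fq // ∃ l ≤ N, x = fenum a l}) (f : {x // x ∈ S}),
        ((f : Polynomial Fq) ^ r ∣ (x : Polynomial Fq))
        ↔ (((κ x).2 f : Polynomial Fq) = 0) := by
  classical
  have hq : 1 < Fintype.card Fq := Fintype.one_lt_card
  have hFmonic : F.Monic := by
    rw [hF]; exact Polynomial.monic_prod_of_monic _ _ (fun f hf => ((hS f hf).1).pow r)
  have hfrmonic : ∀ f ∈ S, ((f : Polynomial Fq) ^ r).Monic := fun f hf => ((hS f hf).1).pow r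
  have hFdeg : F.degree = (F.natDegree : WithBot ℕ) :=
    Polynomial.degree_eq_natDegree hFmonic.ne_zero
  have hfrdeg : ∀ f ∈ S, ((f : Polynomial Fq) ^ r).degree
      = ((r * f.natDegree : ℕ) : WithBot ℕ) := by
    intro f hf
    rw [Polynomial.degree_eq_natDegree (hfrmonic f hf).ne_zero, Polynomial.natDegree_pow]
  have hdsum : F.natDegree = ∑ f ∈ S, r * f.natDegree := by
    rw [hF, Polynomial.natDegree_prod_of_monic _ _ (fun f hf => hfrmonic f hf)]
    exact Finset.sum_congr rfl (fun f _ => Polynomial.natDegree_pow f r)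
  have hcop : (↑S : Set (Polynomial Fq)).Pairwise (Function.onFun IsCoprime fun f => f ^ r) := by
    intro f hf g hg hfg
    simp only [Function.onFun]
    refine IsCoprime.pow ?_
    refine ((hS f hf).2.coprime_iff_not_dvd).mpr (fun hdvd => hfg ?_)
    exact Polynomial.eq_of_monic_of_associated (hS f hf).1 (hS g hg).1
      ((hS f hf).2.associated_of_dvd (hS g hg).2 hdvd)
  have hdvdF : ∀ f ∈ S, (f : Polynomial Fq) ^ r ∣ F := by
    intro f hf; rw [hF]; exact Finset.dvd_prod_of_mem _ hf
  have hmodF : ∀ (x : Polynomial Fq), ∀ f ∈ S, ((f : Polynomial Fq) ^ r ∣ x ↔ f ^ r ∣ x %ₘ F) := by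
    intro x f hf
    have heq : x %ₘ F = x - F * (x /ₘ F) := Polynomial.modByMonic_eq_sub_mul_div x F
    constructor
    · intro h; rw [heq]; exact dvd_sub h ((hdvdF f hf).mul_right _)
    · intro h
      have hx : x = x %ₘ F + F * (x /ₘ F) := by rw [heq]; ring
      rw [hx]; exact dvd_add h ((hdvdF f hf).mul_right _)
  have hbq : 0 < b * Fintype.card Fq ^ F.natDegree := by positivity
  have hleN : ∀ l : ℕ, l ≤ N ↔ l < b * Fintype.card Fq ^ F.natDegree := by
    intro l; omega
  -- the equiv Fin (q^d) ≃ degreeLT d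
  set fQ : Fin (Fintype.card Fq ^ F.natDegree) → ↥(Polynomial.degreeLT Fq F.natDegree) :=
    fun l => ⟨fenum a l.1, fenum_mem_degreeLT a ha0 _ _ l.2⟩ with hfQdef
  have hfQ : Function.Bijective fQ := by
    rw [Nat.bijective_iff_injective_and_card]
    constructor
    · intro l l' h
      exact Fin.ext (fenum_injective a ha.1 ha0 (congrArg Subtype.val h))
    · rw [card_degreeLT]; simp [Nat.card_eq_fintype_card]
  set eQd := Equiv.ofBijective fQ hfQ with heQd
  -- ψ
  set ψ : Fin b × ↥(Polynomial.degreeLT Fq F.natDegree) →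
      {x : Polynomial Fq // ∃ l ≤ N, x = fenum a l} :=
    fun up => ⟨fenum a (up.1.1 * Fintype.card Fq ^ F.natDegree + (eQd.symm up.2).1),
      ⟨_, (hleN _).mpr (by
        have h1 : (eQd.symm up.2).1 < Fintype.card Fq ^ F.natDegree := (eQd.symm up.2).2
        have h2 : up.1.1 < b := up.1.2
        calc up.1.1 * Fintype.card Fq ^ F.natDegree + (eQd.symm up.2).1
            < (up.1.1 + 1) * Fintype.card Fq ^ F.natDegree := by
              rw [add_mul, one_mul]; omega
          _ ≤ b * Fintype.card Fq ^ F.natDegree :=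
              Nat.mul_le_mul_right _ (by omega)), rfl⟩⟩ with hψdef
  have hψval : ∀ up, ((ψ up : Polynomial Fq))
      = (up.2 : Polynomial Fq) + Polynomial.X ^ F.natDegree * fenum a up.1.1 := by
    intro up
    show fenum a _ = _
    rw [fenum_split a ha0 _ up.1.1 _ (eQd.symm up.2).2]
    congr 1
    exact congrArg Subtype.val (eQd.apply_symm_apply up.2)
  have hψ : Function.Bijective ψ := by
    constructor
    · intro up up' h
      have hval := congrArg Subtype.val h
      have hnat := fenum_injective a ha.1 ha0 hval
      obtain ⟨h1, h2⟩ := nat_split_unique (eQd.symm up.2).2 (eQd.symm up'.2).2 hnat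
      have h3 : up.2 = up'.2 := eQd.symm.injective (Fin.ext h2)
      exact Prod.ext (Fin.ext h1) h3
    · intro x
      obtain ⟨l, hl, hx⟩ := x.2
      have hl' : l < b * Fintype.card Fq ^ F.natDegree := (hleN l).mp hl
      have hQpos : 0 < Fintype.card Fq ^ F.natDegree := pow_pos Fintype.card_pos _
      have hu : l / Fintype.card Fq ^ F.natDegree < b :=
        (Nat.div_lt_iff_lt_mul hQpos).mpr hl'
      refine ⟨(⟨l / Fintype.card Fq ^ F.natDegree, hu⟩,
        eQd ⟨l % Fintype.card Fq ^ F.natDegree, Nat.mod_lt _ hQpos⟩), ?_⟩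
      apply Subtype.ext
      show fenum a _ = (x : Polynomial Fq)
      rw [Equiv.symm_apply_apply]
      rw [Nat.div_add_mod']
      exact hx.symm
  -- e2
  set e2f : (Fin b × ↥(Polynomial.degreeLT Fq F.natDegree)) →
      (Fin b × ↥(Polynomial.degreeLT Fq F.natDegree)) :=
    fun up => (up.1,
      ⟨((up.2 : Polynomial Fq) + Polynomial.X ^ F.natDegree * fenum a up.1.1) %ₘ F,
        Polynomial.mem_degreeLT.mpr
          (hFdeg ▸ Polynomial.degree_modByMonic_lt _ hFmonic)⟩) with he2def
  have he2 : Function.Bijective e2f := by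
    rw [Nat.bijective_iff_injective_and_card]
    refine ⟨?_, rfl⟩
    rintro ⟨u, p⟩ ⟨u', p'⟩ h
    have h1 : u = u' := congrArg Prod.fst h
    subst h1
    have h2 : ((p : Polynomial Fq) + Polynomial.X ^ F.natDegree * fenum a u.1) %ₘ F
        = ((p' : Polynomial Fq) + Polynomial.X ^ F.natDegree * fenum a u.1) %ₘ F :=
      congrArg (fun z => ((z.2 : ↥(Polynomial.degreeLT Fq F.natDegree)) : Polynomial Fq)) h
    have e1 := Polynomial.modByMonic_eq_sub_mul_div
      ((p : Polynomial Fq) + Polynomial.X ^ F.natDegree * fenum a u.1) F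
    have e2 := Polynomial.modByMonic_eq_sub_mul_div
      ((p' : Polynomial Fq) + Polynomial.X ^ F.natDegree * fenum a u.1) F
    have hdvd : F ∣ (p : Polynomial Fq) - (p' : Polynomial Fq) := by
      refine ⟨((p : Polynomial Fq) + Polynomial.X ^ F.natDegree * fenum a u.1) /ₘ F
        - ((p' : Polynomial Fq) + Polynomial.X ^ F.natDegree * fenum a u.1) /ₘ F, ?_⟩
      linear_combination h2 - e1 + e2
    have hlt : ((p : Polynomial Fq) - (p' : Polynomial Fq)).degree < F.degree := by
      rw [hFdeg]
      exact Polynomial.mem_degreeLT.mp (Submodule.sub_mem _ p.2 p'.2)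
    have hz := Polynomial.eq_zero_of_dvd_of_degree_lt hdvd hlt
    have : p = p' := Subtype.ext (sub_eq_zero.mp hz)
    rw [this]
  -- Φ
  set Φ : ↥(Polynomial.degreeLT Fq F.natDegree) →
      (∀ f : {x // x ∈ S}, ↥(Polynomial.degreeLT Fq (r * (f : Polynomial Fq).natDegree))) :=
    fun p f => ⟨(p : Polynomial Fq) %ₘ (f : Polynomial Fq) ^ r,
      Polynomial.mem_degreeLT.mpr
        (hfrdeg f.1 f.2 ▸ Polynomial.degree_modByMonic_lt _ (hfrmonic f.1 f.2))⟩ with hΦdef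
  have hΦ : Function.Bijective Φ := by
    rw [Nat.bijective_iff_injective_and_card]
    constructor
    · intro p p' h
      have hdvd : ∀ f ∈ S, (f : Polynomial Fq) ^ r ∣ (p : Polynomial Fq) - (p' : Polynomial Fq) := by
        intro f hf
        have h1 : (p : Polynomial Fq) %ₘ f ^ r = (p' : Polynomial Fq) %ₘ f ^ r :=
          congrArg (fun z => ((z ⟨f, hf⟩ :
            ↥(Polynomial.degreeLT Fq (r * f.natDegree))) : Polynomial Fq)) h
        have e1 := Polynomial.modByMonic_eq_sub_mul_div (p : Polynomial Fq) (f ^ r)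
        have e2 := Polynomial.modByMonic_eq_sub_mul_div (p' : Polynomial Fq) (f ^ r)
        refine ⟨(p : Polynomial Fq) /ₘ f ^ r - (p' : Polynomial Fq) /ₘ f ^ r, ?_⟩
        linear_combination h1 - e1 + e2
      have hdF : F ∣ (p : Polynomial Fq) - (p' : Polynomial Fq) := by
        have hpd := Finset.prod_dvd_of_coprime hcop hdvd
        rwa [← hF] at hpd
      have hlt : ((p : Polynomial Fq) - (p' : Polynomial Fq)).degree < F.degree := by
        rw [hFdeg]
        exact Polynomial.mem_degreeLT.mp (Submodule.sub_mem _ p.2 p'.2)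
      exact Subtype.ext (sub_eq_zero.mp (Polynomial.eq_zero_of_dvd_of_degree_lt hdF hlt))
    · rw [card_degreeLT, Nat.card_pi]
      have : ∀ f : {x // x ∈ S},
          Nat.card ↥(Polynomial.degreeLT Fq (r * (f : Polynomial Fq).natDegree))
            = Fintype.card Fq ^ (r * (f : Polynomial Fq).natDegree) :=
        fun f => card_degreeLT Fq _
      rw [Finset.prod_congr rfl (fun f _ => this f), Finset.prod_pow_eq_pow_sum]
      congr 1
      rw [hdsum, ← Finset.sum_attach S (fun f => r * f.natDegree), Finset.univ_eq_attach]
  -- assemble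
  refine ⟨(Equiv.ofBijective ψ hψ).symm.trans ((Equiv.ofBijective e2f he2).trans
    ((Equiv.refl (Fin b)).prodCongr (Equiv.ofBijective Φ hΦ))), ?_⟩
  intro x f
  obtain ⟨up, rfl⟩ := hψ.2 x
  have hsymm : (Equiv.ofBijective ψ hψ).symm (ψ up) = up := by
    rw [show ψ up = (Equiv.ofBijective ψ hψ) up from rfl, Equiv.symm_apply_apply]
  rw [Equiv.trans_apply, Equiv.trans_apply, hsymm]
  have hval : (((Equiv.refl (Fin b)).prodCongr (Equiv.ofBijective Φ hΦ))
      ((Equiv.ofBijective e2f he2) up)).2 f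
      = Φ (e2f up).2 f := rfl
  rw [hval]
  have hΦval : (Φ (e2f up).2 f : Polynomial Fq)
      = (((ψ up : Polynomial Fq)) %ₘ F) %ₘ (f : Polynomial Fq) ^ r := by
    show ((e2f up).2 : Polynomial Fq) %ₘ (f : Polynomial Fq) ^ r = _
    congr 1
    show ((up.2 : Polynomial Fq) + Polynomial.X ^ F.natDegree * fenum a up.1.1) %ₘ F = _
    rw [hψval up]
  rw [hΦval]
  rw [hmodF (ψ up : Polynomial Fq) f.1 f.2]
  exact (Polynomial.modByMonic_eq_zero_iff_dvd (hfrmonic f.1 f.2)).symm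

private def prodSubtypeSndEquiv {α β : Type*} (p : β → Prop) :
    {w : α × β // p w.2} ≃ α × {y : β // p y} where
  toFun w := (w.1.1, ⟨w.1.2, w.2⟩)
  invFun ay := ⟨(ay.1, ay.2.1), ay.2.2⟩
  left_inv w := rfl
  right_inv ay := rfl

/-- Proposition 3.3: the exact count of tuples in `E_S ∩ ℳ_N`, where
`F = ∏_{f ∈ S} f^r` and `N = b·q^{deg F} - 1`. -/
theorem count_hwise_in_M_N {Fq : Type*} [Field Fq] [Fintype Fq]
    (a : Fin (Fintype.card Fq) → Fq) (ha : Function.Bijective a)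
    (ha0 : a ⟨0, Fintype.card_pos⟩ = 0)
    (r j m : ℕ) (hr : 1 ≤ r) (hj : 1 ≤ j) (hjm : j ≤ m)
    (H : Finset (Finset (Fin m))) (hH : ∀ e ∈ H, e.card = j)
    (S : Finset (Polynomial Fq)) (hS : ∀ f ∈ S, f.Monic ∧ Irreducible f)
    (E : Set (Fin m → Polynomial Fq))
    (hE : ∀ g, g ∈ E ↔ ∀ e ∈ H, ∀ f ∈ S, ¬ (∀ i ∈ e, f ^ r ∣ g i))
    (F : Polynomial Fq) (hF : F = ∏ f ∈ S, f ^ r)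
    (b : ℕ) (hb : 1 ≤ b) (N : ℕ) (hN : N = b * Fintype.card Fq ^ F.natDegree - 1) :
    (Nat.card {g : Fin m → Polynomial Fq //
        g ∈ E ∧ ∀ i, ∃ l ≤ N, g i = fenum a l} : ℝ) =
      ((b : ℝ) * (Fintype.card Fq : ℝ) ^ F.natDegree) ^ m *
        (∏ f ∈ S, ((Fintype.card Fq : ℝ) ^ (r * m * f.natDegree))⁻¹) *
        ∏ f ∈ S, ∑ k ∈ Finset.range (m + 1), (indepCount H k : ℝ) *
          ((Fintype.card Fq : ℝ) ^ (r * f.natDegree) - 1) ^ (m - k) := by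
  classical
  have hq1 : 1 < Fintype.card Fq := Fintype.one_lt_card
  have hq0 : (0 : ℝ) < (Fintype.card Fq : ℝ) := by positivity
  have hfrmonic : ∀ f ∈ S, ((f : Polynomial Fq) ^ r).Monic := fun f hf => ((hS f hf).1).pow r
  have hdsum : F.natDegree = ∑ f ∈ S, r * f.natDegree := by
    rw [hF, Polynomial.natDegree_prod_of_monic _ _ (fun f hf => hfrmonic f hf)]
    exact Finset.sum_congr rfl (fun f _ => Polynomial.natDegree_pow f r)
  obtain ⟨κ, hκ⟩ := exists_kappa a ha ha0 r S hS F hF b hb N hN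
  -- the natural-number weight of each f
  set Wn : Polynomial Fq → ℕ := fun f => ∑ k ∈ Finset.range (m + 1),
    indepCount H k * (Fintype.card Fq ^ (r * f.natDegree) - 1) ^ (m - k) with hWn
  -- per-coordinate-factor count
  have hperf : ∀ f : {x // x ∈ S},
      Nat.card {σ : Fin m → ↥(Polynomial.degreeLT Fq (r * (f : Polynomial Fq).natDegree)) //
        ∀ e ∈ H, ¬ ∀ i ∈ e, (σ i : Polynomial Fq) = 0} = Wn f.1 := by
    intro f
    letI : Fintype ↥(Polynomial.degreeLT Fq (r * (f : Polynomial Fq).natDegree)) :=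
      Fintype.ofFinite _
    rw [Nat.card_congr (Equiv.subtypeEquivRight (q := fun σ => ∀ e ∈ H, ¬ ∀ i ∈ e, σ i = 0)
      (fun σ => by
        refine forall₂_congr (fun e he => not_congr (forall₂_congr (fun i hi => ?_)))
        exact ZeroMemClass.coe_eq_zero))]
    rw [count_pattern H]
    have hcV : Fintype.card ↥(Polynomial.degreeLT Fq (r * (f : Polynomial Fq).natDegree))
        = Fintype.card Fq ^ (r * (f : Polynomial Fq).natDegree) := by
      rw [← Nat.card_eq_fintype_card, card_degreeLT]
    rw [hcV]
  -- equivalence chain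
  have E1 : {g : Fin m → Polynomial Fq // g ∈ E ∧ ∀ i, ∃ l ≤ N, g i = fenum a l}
      ≃ {h : Fin m → {x : Polynomial Fq // ∃ l ≤ N, x = fenum a l} //
          ∀ e ∈ H, ∀ f : {x // x ∈ S}, ¬ ∀ i ∈ e, (f : Polynomial Fq) ^ r ∣ (h i : Polynomial Fq)} :=
    { toFun := fun g => ⟨fun i => ⟨g.1 i, g.2.2 i⟩, by
        intro e he f hall
        exact ((hE g.1).mp g.2.1) e he f.1 f.2 (fun i hi => hall i hi)⟩
      invFun := fun h => ⟨fun i => (h.1 i : Polynomial Fq),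
        ⟨(hE _).mpr (fun e he f hf hall => h.2 e he ⟨f, hf⟩ (fun i hi => hall i hi)),
          fun i => (h.1 i).2⟩⟩
      left_inv := fun g => rfl
      right_inv := fun h => rfl }
  have E2 := Equiv.subtypeEquiv (p := fun h : Fin m → {x : Polynomial Fq // ∃ l ≤ N, x = fenum a l} =>
      ∀ e ∈ H, ∀ f : {x // x ∈ S}, ¬ ∀ i ∈ e, (f : Polynomial Fq) ^ r ∣ (h i : Polynomial Fq))
    (q := fun z : Fin m → Fin b × (∀ f : {x // x ∈ S},
        ↥(Polynomial.degreeLT Fq (r * (f : Polynomial Fq).natDegree))) =>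
      ∀ e ∈ H, ∀ f : {x // x ∈ S}, ¬ ∀ i ∈ e, ((z i).2 f : Polynomial Fq) = 0)
    (Equiv.arrowCongr (Equiv.refl (Fin m)) κ)
    (fun h => forall₂_congr (fun e he => forall_congr' (fun f =>
      not_congr (forall₂_congr (fun i hi => hκ (h i) f)))))
  have E3 := Equiv.subtypeEquiv
    (p := fun z : Fin m → Fin b × (∀ f : {x // x ∈ S},
        ↥(Polynomial.degreeLT Fq (r * (f : Polynomial Fq).natDegree))) =>
      ∀ e ∈ H, ∀ f : {x // x ∈ S}, ¬ ∀ i ∈ e, ((z i).2 f : Polynomial Fq) = 0)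
    (q := fun w : (Fin m → Fin b) × (Fin m → ∀ f : {x // x ∈ S},
        ↥(Polynomial.degreeLT Fq (r * (f : Polynomial Fq).natDegree))) =>
      ∀ e ∈ H, ∀ f : {x // x ∈ S}, ¬ ∀ i ∈ e, ((w.2 i) f : Polynomial Fq) = 0)
    (Equiv.arrowProdEquivProdArrow _ _ _) (fun z => Iff.rfl)
  have E4 := prodSubtypeSndEquiv
    (α := Fin m → Fin b)
    (p := fun ρ : Fin m → ∀ f : {x // x ∈ S},
        ↥(Polynomial.degreeLT Fq (r * (f : Polynomial Fq).natDegree)) =>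
      ∀ e ∈ H, ∀ f : {x // x ∈ S}, ¬ ∀ i ∈ e, ((ρ i) f : Polynomial Fq) = 0)
  have E5 := Equiv.subtypeEquiv
    (p := fun ρ : Fin m → ∀ f : {x // x ∈ S},
        ↥(Polynomial.degreeLT Fq (r * (f : Polynomial Fq).natDegree)) =>
      ∀ e ∈ H, ∀ f : {x // x ∈ S}, ¬ ∀ i ∈ e, ((ρ i) f : Polynomial Fq) = 0)
    (q := fun t : ∀ f : {x // x ∈ S},
        Fin m → ↥(Polynomial.degreeLT Fq (r * (f : Polynomial Fq).natDegree)) =>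
      ∀ f : {x // x ∈ S}, ∀ e ∈ H, ¬ ∀ i ∈ e, (t f i : Polynomial Fq) = 0)
    (Equiv.piComm _)
    (fun ρ => ⟨fun h f e he hall => h e he f hall, fun h e he f hall => h f e he hall⟩)
  have E6 := Equiv.subtypePiEquivPi
    (β := fun f : {x // x ∈ S} =>
      Fin m → ↥(Polynomial.degreeLT Fq (r * (f : Polynomial Fq).natDegree)))
    (p := fun f σ => ∀ e ∈ H, ¬ ∀ i ∈ e, (σ i : Polynomial Fq) = 0)
  have hcount : Nat.card {g : Fin m → Polynomial Fq //
      g ∈ E ∧ ∀ i, ∃ l ≤ N, g i = fenum a l} = b ^ m * ∏ f ∈ S, Wn f := by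
    rw [Nat.card_congr (E1.trans (E2.trans (E3.trans (E4.trans
      (Equiv.prodCongr (Equiv.refl (Fin m → Fin b)) (E5.trans E6))))))]
    rw [Nat.card_prod, Nat.card_fun, Nat.card_pi]
    congr 1
    · simp [Nat.card_eq_fintype_card]
    · rw [Finset.prod_congr rfl (fun f _ => hperf f), Finset.univ_eq_attach,
        Finset.prod_attach S Wn]
  -- cast the per-factor weight to ℝ
  have hWcast : ∀ f ∈ S, ((Wn f : ℕ) : ℝ) = ∑ k ∈ Finset.range (m + 1),
      (indepCount H k : ℝ) * ((Fintype.card Fq : ℝ) ^ (r * f.natDegree) - 1) ^ (m - k) := by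
    intro f _
    rw [hWn]
    rw [Nat.cast_sum]
    refine Finset.sum_congr rfl (fun k _ => ?_)
    rw [Nat.cast_mul, Nat.cast_pow, Nat.cast_sub (Nat.one_le_pow _ _ Fintype.card_pos),
      Nat.cast_pow, Nat.cast_one]
  -- key real identity
  have hkey : ((b : ℝ) * (Fintype.card Fq : ℝ) ^ F.natDegree) ^ m *
      (∏ f ∈ S, ((Fintype.card Fq : ℝ) ^ (r * m * f.natDegree))⁻¹) = (b : ℝ) ^ m := by
    rw [Finset.prod_inv_distrib, Finset.prod_pow_eq_pow_sum]
    have hsum : ∑ f ∈ S, r * m * f.natDegree = m * F.natDegree := by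
      rw [hdsum, Finset.mul_sum]
      exact Finset.sum_congr rfl (fun f _ => by ring)
    rw [hsum, mul_pow, ← pow_mul, show F.natDegree * m = m * F.natDegree by ring,
      mul_assoc, mul_inv_cancel₀ (pow_ne_zero _ (ne_of_gt hq0)), mul_one]
  rw [hcount]
  rw [Nat.cast_mul, Nat.cast_pow, Nat.cast_prod]
  rw [hkey]
  congr 1
  exact Finset.prod_congr rfl hWcast
end

section
/- Fix integers m ≥ j ≥ 2 and let H be a j-uniform hypergraph on the vertex set {1,…,m}. Then for every real x ∈ [0,1], ∑_{k=0}^m i_k(H) x^k (1−x)^{m−k} ≥ 1 − (m−1)^2 x^2. -/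
open scoped BigOperators

lemma indepCount_eq {m : ℕ} (H : Finset (Finset (Fin m))) (k : ℕ) :
    indepCount H k
      = (Finset.univ.filter
          (fun s : Finset (Fin m) => (∀ e ∈ H, ¬ e ⊆ s) ∧ s.card = k)).card := by
  classical
  rw [indepCount, Nat.card_eq_fintype_card, Fintype.card_subtype]

lemma indep_of_small {j m : ℕ} (hj : 2 ≤ j) (H : Finset (Finset (Fin m)))
    (hH : ∀ e ∈ H, e.card = j) {s : Finset (Fin m)} (hs : s.card ≤ 1) :
    ∀ e ∈ H, ¬ e ⊆ s := by
  intro e he hsub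
  have h1 := hH e he
  have h2 := Finset.card_le_card hsub
  omega

lemma indepCount_zero {j m : ℕ} (hj : 2 ≤ j) (H : Finset (Finset (Fin m)))
    (hH : ∀ e ∈ H, e.card = j) : indepCount H 0 = 1 := by
  classical
  rw [indepCount_eq]
  have h : Finset.univ.filter (fun s : Finset (Fin m) => (∀ e ∈ H, ¬ e ⊆ s) ∧ s.card = 0)
      = {∅} := by
    ext s
    simp only [Finset.mem_filter, Finset.mem_univ, true_and, Finset.mem_singleton,
      Finset.card_eq_zero]
    constructor
    · rintro ⟨_, h⟩; exact h
    · rintro rfl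
      exact ⟨indep_of_small hj H hH (by simp), rfl⟩
  rw [h, Finset.card_singleton]

lemma indepCount_one {j m : ℕ} (hj : 2 ≤ j) (H : Finset (Finset (Fin m)))
    (hH : ∀ e ∈ H, e.card = j) : indepCount H 1 = m := by
  classical
  rw [indepCount_eq]
  have h : Finset.univ.filter (fun s : Finset (Fin m) => (∀ e ∈ H, ¬ e ⊆ s) ∧ s.card = 1)
      = Finset.univ.filter (fun s : Finset (Fin m) => s.card = 1) := by
    ext s
    simp only [Finset.mem_filter, Finset.mem_univ, true_and]
    exact ⟨fun h => h.2, fun h => ⟨indep_of_small hj H hH h.le, h⟩⟩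
  have h2 : Finset.univ.filter (fun s : Finset (Fin m) => s.card = 1)
      = Finset.powersetCard 1 (Finset.univ : Finset (Fin m)) := by
    rw [Finset.powersetCard_eq_filter, Finset.powerset_univ]
  rw [h, h2, Finset.card_powersetCard, Finset.card_univ, Fintype.card_fin,
    Nat.choose_one_right]

/-- For a `j`-uniform hypergraph `H` on `m` vertices with `m ≥ j ≥ 2` and `x ∈ [0,1]`,
`∑_{k=0}^m i_k(H) x^k (1-x)^{m-k} ≥ 1 - (m-1)^2 x^2`. -/
theorem indep_poly_ge {j m : ℕ} (hj : 2 ≤ j) (hjm : j ≤ m)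
    (H : Finset (Finset (Fin m))) (hH : ∀ e ∈ H, e.card = j)
    (x : ℝ) (hx0 : 0 ≤ x) (hx1 : x ≤ 1) :
    1 - ((m : ℝ) - 1) ^ 2 * x ^ 2 ≤
      ∑ k ∈ Finset.range (m + 1), (indepCount H k : ℝ) * x ^ k * (1 - x) ^ (m - k) := by
  classical
  have hm2 : 2 ≤ m := le_trans hj hjm
  have h1x : (0:ℝ) ≤ 1 - x := by linarith
  set f : ℕ → ℝ := fun k => (indepCount H k : ℝ) * x ^ k * (1 - x) ^ (m - k) with hf
  have hnn : ∀ k ∈ Finset.range (m + 1), 0 ≤ f k := by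
    intro k _
    exact mul_nonneg (mul_nonneg (Nat.cast_nonneg _) (pow_nonneg hx0 _))
      (pow_nonneg h1x _)
  have hsub : ({0, 1} : Finset ℕ) ⊆ Finset.range (m + 1) := by
    intro k hk
    simp only [Finset.mem_insert, Finset.mem_singleton] at hk
    rcases hk with rfl | rfl <;> simp [Finset.mem_range] <;> omega
  have hle : ∑ k ∈ ({0, 1} : Finset ℕ), f k ≤ ∑ k ∈ Finset.range (m + 1), f k :=
    Finset.sum_le_sum_of_subset_of_nonneg hsub (fun k hk _ => hnn k hk)
  have hpair : ∑ k ∈ ({0, 1} : Finset ℕ), f k = f 0 + f 1 :=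
    Finset.sum_pair (by norm_num)
  obtain ⟨n, rfl⟩ : ∃ n, m = n + 1 := ⟨m - 1, by omega⟩
  have hf0 : f 0 = (1 - x) ^ (n + 1) := by
    simp [hf, indepCount_zero hj H hH]
  have hf1 : f 1 = ((n : ℝ) + 1) * x * (1 - x) ^ n := by
    simp only [hf, indepCount_one hj H hH, pow_one, Nat.add_sub_cancel]
    push_cast
    ring
  have hb : (1 : ℝ) - n * x ≤ (1 - x) ^ n := by
    have := one_add_mul_le_pow (a := -x) (by linarith) n
    calc (1 : ℝ) - n * x = 1 + n * (-x) := by ring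
    _ ≤ (1 + (-x)) ^ n := this
    _ = (1 - x) ^ n := by ring_nf
  have hsum : (1 - x) ^ n * (1 + n * x) ≤ ∑ k ∈ Finset.range (n + 1 + 1), f k := by
    calc (1 - x) ^ n * (1 + n * x) = f 0 + f 1 := by
          rw [hf0, hf1]; ring
    _ = ∑ k ∈ ({0, 1} : Finset ℕ), f k := hpair.symm
    _ ≤ _ := hle
  have hnx : (0:ℝ) ≤ 1 + n * x := by positivity
  have key : 1 - (n : ℝ) ^ 2 * x ^ 2 ≤ (1 - x) ^ n * (1 + n * x) := by
    nlinarith [mul_le_mul_of_nonneg_right hb hnx]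
  have : ((↑(n + 1) : ℝ) - 1) = (n : ℝ) := by push_cast; ring
  rw [this]
  calc (1 : ℝ) - (n : ℝ) ^ 2 * x ^ 2 ≤ (1 - x) ^ n * (1 + n * x) := key
  _ ≤ _ := hsum
end
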